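/- For each of the four BB84 input states (|0⟩, |1⟩, |+⟩, |−⟩), the probability that a weak measurement of either H^+ or H^- (with Gaussian pointer of variance σ² and coupling g) collapses the state into its orthogonal state is δ_wm = (1/4)[1 − exp(−g²/(8σ²))]. -/

import Mathlib

noncomputable section

open Matrix Complex Real

/-- for each BB84 input state (making angle π/8 with the H basis),
    the probability that the weak measurement collapses the state into its
    orthogonal state is δ_wm = (1/4)(1 − e^{−g²/(8σ²)}). Basis index 0
    corresponds to |H_⊥⟩ and 1 to |H⟩. -/
theorem stmt7 (σ g : ℝ) (hσ : 0 < σ) (α β : ℂ)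
    (hnorm : ‖α‖ ^ 2 + ‖β‖ ^ 2 = 1)
    (hBB84 : ‖β‖ ^ 2 = Real.cos (Real.pi/8) ^ 2 ∨
             ‖β‖ ^ 2 = Real.sin (Real.pi/8) ^ 2) :
    let e := Real.exp (-g^2 / (8 * σ^2))
    let ψ : Fin 2 → ℂ := ![α, β]
    let ψperp : Fin 2 → ℂ := ![-(starRingEnd ℂ) β, (starRingEnd ℂ) α]
    let ρqubit : Matrix (Fin 2) (Fin 2) ℂ :=
      e • vecMulVec ψ (star ψ)
        + (1 - e) • !![((‖α‖ ^ 2 : ℝ) : ℂ), 0; 0, ((‖β‖ ^ 2 : ℝ) : ℂ)]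
    star ψperp ⬝ᵥ (ρqubit *ᵥ ψperp) = (((1/4) * (1 - e) : ℝ) : ℂ) := by
  intro e ψ ψperp ρqubit
  have hab : ‖α‖ ^ 2 * ‖β‖ ^ 2 = 1/8 := by
    have hsc : Real.sin (Real.pi/8) * Real.cos (Real.pi/8) = Real.sin (Real.pi/4) / 2 := by
      have := Real.sin_two_mul (Real.pi/8)
      have h2 : 2 * (Real.pi/8) = Real.pi/4 := by ring
      rw [h2] at this
      linarith
    have h4 : Real.sin (Real.pi/4) = Real.sqrt 2 / 2 := Real.sin_pi_div_four
    have hsq : (Real.sin (Real.pi/8) * Real.cos (Real.pi/8))^2 = 1/8 := by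
      rw [hsc, h4]
      rw [div_pow, div_pow, Real.sq_sqrt (by norm_num : (2:ℝ) ≥ 0)]
      norm_num
    have hpyth : Real.sin (Real.pi/8)^2 + Real.cos (Real.pi/8)^2 = 1 :=
      Real.sin_sq_add_cos_sq _
    rcases hBB84 with h | h
    · have ha : ‖α‖ ^ 2 = Real.sin (Real.pi/8)^2 := by linarith
      rw [ha, h]; nlinarith [hsq]
    · have ha : ‖α‖ ^ 2 = Real.cos (Real.pi/8)^2 := by linarith
      rw [ha, h]; nlinarith [hsq]
  have hA : ((starRingEnd ℂ) α) * α = ((‖α‖ ^ 2 : ℝ) : ℂ) := by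
    rw [mul_comm, Complex.mul_conj']
    simp [Complex.normSq_eq_norm_sq]
  have hB : ((starRingEnd ℂ) β) * β = ((‖β‖ ^ 2 : ℝ) : ℂ) := by
    rw [mul_comm, Complex.mul_conj']
    simp [Complex.normSq_eq_norm_sq]
  simp only [ψ, ψperp, ρqubit, dotProduct, Matrix.mulVec, Fin.sum_univ_two,
    Matrix.vecMulVec_apply, Pi.star_apply, Matrix.add_apply, Matrix.smul_apply,
    Matrix.cons_val_zero, Matrix.cons_val_one, Matrix.head_cons, Matrix.of_apply,
    Pi.smul_apply, smul_eq_mul, RCLike.star_def, map_neg, Complex.conj_conj,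
    Matrix.cons_val', Matrix.empty_val', Matrix.cons_val_fin_one, Matrix.head_fin_const]
  have key : ((‖α‖ ^ 2 : ℝ) : ℂ) * ((‖β‖ ^ 2 : ℝ) : ℂ) = ((1:ℝ)/8 : ℝ) := by
    push_cast
    have := congrArg (Complex.ofReal) hab
    push_cast at this
    linear_combination this
  ring_nf
  ring_nf at hA hB key
  simp only [Complex.real_smul]
  push_cast at hA hB key ⊢
  linear_combination ((1:ℂ)-(e:ℂ)) * ((‖α‖:ℂ)^2 * hB + (‖β‖:ℂ)^2 * hA)
    + 2*((1:ℂ)-(e:ℂ))*key
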